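/- arXiv:1611.04293 — 6 statements merged into one kernel-verified Lean document; each statement's English description precedes it below -/
import Mathlib

section
/- Let f : [0,1] → ℝ be defined by f(x) = 1/2 + (1 − 2x)·√(1/4 − (x − 1/2)²). Then the minimum value of f on [0,1] is 1/4, attained exactly at x = 1/2 + √2/4; in particular f(1/2 + √2/4) = 1/4 and f(x) ≥ 1/4 for all x ∈ [0,1]. -/
set_option maxHeartbeats 1000000 in
/-- The minimum of the S-curve on `[0,1]` is `1/4`, attained exactly at `x = 1/2 + √2/4`. -/

theorem s_curve_min (f : ℝ → ℝ)
    (hf : ∀ x ∈ Set.Icc (0 : ℝ) 1,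
      f x = 1 / 2 + (1 - 2 * x) * Real.sqrt (1 / 4 - (x - 1 / 2) ^ 2)) :
    f (1 / 2 + Real.sqrt 2 / 4) = 1 / 4 ∧
    (∀ x ∈ Set.Icc (0 : ℝ) 1, 1 / 4 ≤ f x) ∧
    (∀ x ∈ Set.Icc (0 : ℝ) 1, f x = 1 / 4 → x = 1 / 2 + Real.sqrt 2 / 4) := by
  have hs2 : Real.sqrt 2 ^ 2 = 2 := Real.sq_sqrt (by norm_num)
  have hs2pos : (0:ℝ) < Real.sqrt 2 := Real.sqrt_pos.mpr (by norm_num)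
  have hs2lt : Real.sqrt 2 < 2 := by nlinarith
  -- generic facts about s = sqrt(radicand)
  have key : ∀ x ∈ Set.Icc (0:ℝ) 1,
      (Real.sqrt (1/4 - (x - 1/2)^2)) ^ 2 = 1/4 - (x - 1/2)^2 := by
    intro x hx
    obtain ⟨h0, h1⟩ := hx
    exact Real.sq_sqrt (by nlinarith)
  have hx0mem : (1/2 + Real.sqrt 2 / 4) ∈ Set.Icc (0:ℝ) 1 := by
    constructor <;> nlinarith
  have hrad : (1:ℝ)/4 - ((1/2 + Real.sqrt 2 / 4) - 1/2)^2 = 1/8 := by nlinarith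
  have h8 : Real.sqrt (1/8) = Real.sqrt 2 / 4 := by
    rw [show (1/8:ℝ) = (Real.sqrt 2 / 4)^2 by nlinarith]
    exact Real.sqrt_sq (by positivity)
  have hval : f (1/2 + Real.sqrt 2 / 4) = 1/4 := by
    rw [hf _ hx0mem, hrad, h8]; nlinarith
  refine ⟨hval, ?_, ?_⟩
  · intro x hx
    rw [hf x hx]
    set s := Real.sqrt (1/4 - (x - 1/2)^2) with hs
    have hsq := key x hx
    have hsnn : 0 ≤ s := Real.sqrt_nonneg _
    nlinarith [sq_nonneg ((2*x-1)*s - 1/4), sq_nonneg (2*(x-1/2)^2 - 1/4)]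
  · intro x hx hfx
    rw [hf x hx] at hfx
    set s := Real.sqrt (1/4 - (x - 1/2)^2) with hs
    have hsq := key x hx
    have hsnn : 0 ≤ s := Real.sqrt_nonneg _
    have ha : (2*x - 1) * s = 1/4 := by linarith [hfx]
    have hu2 : (x - 1/2)^2 = 1/8 := by
      nlinarith [sq_nonneg (2*(x-1/2)^2 - 1/4), sq_nonneg ((2*x-1)*s - 1/4), sq_nonneg ((2*x-1)*s + 1/4)]
    have hupos : 0 < x - 1/2 := by nlinarith
    have hmul : (x - 1/2 - Real.sqrt 2 / 4) * (x - 1/2 + Real.sqrt 2 / 4) = 0 := by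
      nlinarith
    rcases mul_eq_zero.mp hmul with h | h
    · linarith
    · nlinarith
end

section
/- Let f : [0,1] → ℝ be defined by f(x) = 1/2 + (1 − 2x)·√(1/4 − (x − 1/2)²). Then the range of f on [0,1] is exactly the interval [1/4, 3/4]. -/
noncomputable def gS : ℝ → ℝ := fun x => 1 / 2 + (1 - 2 * x) * Real.sqrt (1 / 4 - (x - 1 / 2) ^ 2)

lemma gS_cont : Continuous gS := by
  unfold gS
  continuity

lemma sqrt_eighth : Real.sqrt (1 / 8) = Real.sqrt 2 / 4 := by
  rw [show (1/8:ℝ) = (Real.sqrt 2 / 4)^2 by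
    rw [div_pow, Real.sq_sqrt (by norm_num : (2:ℝ) ≥ 0)]; norm_num]
  exact Real.sqrt_sq (by positivity)

lemma gS_at_a : gS (1/2 - Real.sqrt 2 / 4) = 3/4 := by
  have h2 : Real.sqrt 2 ^ 2 = 2 := Real.sq_sqrt (by norm_num)
  unfold gS
  have harg : (1/4 : ℝ) - ((1/2 - Real.sqrt 2 / 4) - 1/2)^2 = 1/8 := by
    ring_nf; nlinarith [h2]
  rw [harg, sqrt_eighth]
  nlinarith [h2]

lemma gS_at_b : gS (1/2 + Real.sqrt 2 / 4) = 1/4 := by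
  have h2 : Real.sqrt 2 ^ 2 = 2 := Real.sq_sqrt (by norm_num)
  unfold gS
  have harg : (1/4 : ℝ) - ((1/2 + Real.sqrt 2 / 4) - 1/2)^2 = 1/8 := by
    ring_nf; nlinarith [h2]
  rw [harg, sqrt_eighth]
  nlinarith [h2]

/-- The range of the S-curve on `[0,1]` is exactly the interval `[1/4, 3/4]`. -/
theorem s_curve_range (f : ℝ → ℝ)
    (hf : ∀ x ∈ Set.Icc (0 : ℝ) 1,
      f x = 1 / 2 + (1 - 2 * x) * Real.sqrt (1 / 4 - (x - 1 / 2) ^ 2)) :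
    f '' Set.Icc (0 : ℝ) 1 = Set.Icc (1 / 4 : ℝ) (3 / 4) := by
  have hs2 : Real.sqrt 2 ^ 2 = 2 := Real.sq_sqrt (by norm_num)
  have hs2pos : (0:ℝ) < Real.sqrt 2 := Real.sqrt_pos.mpr (by norm_num)
  have hs2lt : Real.sqrt 2 < 2 := by nlinarith
  apply Set.Subset.antisymm
  · rintro y ⟨x, hx, rfl⟩
    rw [hf x hx]
    obtain ⟨hx0, hx1⟩ := hx
    set r : ℝ := 1/4 - (x - 1/2)^2 with hr
    have hq : (x - 1/2)^2 ≤ 1/4 := by nlinarith [mul_nonneg hx0 (by linarith : (0:ℝ) ≤ 1 - x)]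
    have hrnn : 0 ≤ r := by rw [hr]; linarith
    have habs : |(1 - 2*x) * Real.sqrt r| ≤ 1/4 := by
      have h1 : |(1 - 2*x) * Real.sqrt r| = Real.sqrt ((1 - 2*x)^2 * r) := by
        rw [abs_mul, abs_of_nonneg (Real.sqrt_nonneg _), ← Real.sqrt_sq_eq_abs,
          ← Real.sqrt_mul (sq_nonneg _)]
      rw [h1]
      have h2 : (1 - 2*x)^2 * r ≤ 1/16 := by
        rw [hr]; nlinarith [sq_nonneg (2*(x-1/2)^2 - 1/4)]
      calc Real.sqrt ((1 - 2*x)^2 * r) ≤ Real.sqrt (1/16) := Real.sqrt_le_sqrt h2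
        _ = 1/4 := by
            rw [show (1/16:ℝ) = (1/4)^2 by norm_num]; exact Real.sqrt_sq (by norm_num)
    rw [abs_le] at habs
    constructor <;> linarith [habs.1, habs.2]
  · set a : ℝ := 1/2 - Real.sqrt 2 / 4 with ha
    set b : ℝ := 1/2 + Real.sqrt 2 / 4 with hb
    have hab : a ≤ b := by rw [ha, hb]; linarith
    have hsub : Set.Icc a b ⊆ Set.Icc (0:ℝ) 1 := by
      apply Set.Icc_subset_Icc <;> [rw [ha]; rw [hb]] <;> nlinarith
    have hiv : Set.Icc (gS b) (gS a) ⊆ gS '' Set.Icc a b :=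
      intermediate_value_Icc' hab gS_cont.continuousOn
    rw [gS_at_a, gS_at_b] at hiv
    intro y hy
    obtain ⟨x, hx, hgx⟩ := hiv hy
    exact ⟨x, hsub hx, by rw [hf x (hsub hx), ← hgx]; rfl⟩
end

section
/- Let f : [0,1] → ℝ be defined by f(x) = 1/2 + (1 − 2x)·√(1/4 − (x − 1/2)²). Then f is strictly monotonically increasing on the interval [0, 1/2 − √2/4]. -/
set_option maxHeartbeats 1000000


/-- The S-curve is strictly increasing on `[0, 1/2 − √2/4]`. -/
theorem s_curve_strictMonoOn_left (f : ℝ → ℝ)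
    (hf : ∀ x ∈ Set.Icc (0 : ℝ) 1,
      f x = 1 / 2 + (1 - 2 * x) * Real.sqrt (1 / 4 - (x - 1 / 2) ^ 2)) :
    StrictMonoOn f (Set.Icc (0 : ℝ) (1 / 2 - Real.sqrt 2 / 4)) := by
  have h2 : (1 : ℝ) ≤ Real.sqrt 2 := by
    rw [show (1:ℝ) = Real.sqrt 1 by simp]
    exact Real.sqrt_le_sqrt (by norm_num)
  intro x hx y hy hxy
  obtain ⟨hx0, hx1⟩ := hx
  obtain ⟨hy0, hy1⟩ := hy
  have hs2 : Real.sqrt 2 ≤ 2 - 4 * y := by linarith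
  have hsq : (2:ℝ) ≤ (2 - 4*y)^2 := by
    nlinarith [Real.sq_sqrt (by norm_num : (0:ℝ) ≤ 2), Real.sqrt_nonneg 2]
  have hy2 : y < 1/2 := by linarith
  have hx2 : x < 1/2 := by linarith
  rw [hf x ⟨hx0, by linarith⟩, hf y ⟨hy0, by linarith⟩]
  have hax : (0:ℝ) ≤ 1/4 - (x - 1/2)^2 := by nlinarith
  have hby : (0:ℝ) < 1/4 - (y - 1/2)^2 := by nlinarith
  set A := Real.sqrt (1/4 - (x - 1/2)^2) with hAdef
  set B := Real.sqrt (1/4 - (y - 1/2)^2) with hBdef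
  have hA : A^2 = 1/4 - (x - 1/2)^2 := Real.sq_sqrt hax
  have hB : B^2 = 1/4 - (y - 1/2)^2 := Real.sq_sqrt hby.le
  have hAnn : 0 ≤ A := Real.sqrt_nonneg _
  have hBpos : 0 < B := Real.sqrt_pos.mpr hby
  have h1x : (0:ℝ) < 1 - 2*x := by linarith
  have h1y : (0:ℝ) < 1 - 2*y := by linarith
  have hlt : ((1 - 2*x) * A)^2 < ((1 - 2*y) * B)^2 := by
    have e1 : ((1 - 2*x) * A)^2 = (1 - 2*x)^2 * (1/4 - (x - 1/2)^2) := by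
      rw [mul_pow, hA]
    have e2 : ((1 - 2*y) * B)^2 = (1 - 2*y)^2 * (1/4 - (y - 1/2)^2) := by
      rw [mul_pow, hB]
    rw [e1, e2]
    have ha : (y - 1/2)^2 < (x - 1/2)^2 := by nlinarith
    have hab : (0:ℝ) < 4 * ((x - 1/2)^2 + (y - 1/2)^2) - 1 := by nlinarith
    linarith [mul_pos (sub_pos.mpr ha) hab]
  have key : (1 - 2*x) * A < (1 - 2*y) * B :=
    lt_of_pow_lt_pow_left₀ 2 (mul_pos h1y hBpos).le hlt
  linarith
end

section
/- Let f : [0,1] → ℝ be defined by f(x) = 1/2 + (1 − 2x)·√(1/4 − (x − 1/2)²). Then f is strictly monotonically decreasing on the interval [1/2 − √2/4, 1/2 + √2/4]. -/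
private lemma s_curve_aux_pos (u v : ℝ) (hu : 0 ≤ u) (huv : u < v)
    (hv : v ≤ Real.sqrt 2 / 4) :
    u * Real.sqrt (1 / 4 - u ^ 2) < v * Real.sqrt (1 / 4 - v ^ 2) := by
  have h2 : (Real.sqrt 2) ^ 2 = 2 := Real.sq_sqrt (by norm_num)
  have hs0 : (0:ℝ) ≤ Real.sqrt 2 := Real.sqrt_nonneg 2
  have hv2 : v ^ 2 ≤ 1 / 8 := by nlinarith
  have hu2 : u ^ 2 < 1 / 8 := by nlinarith
  have e1 : u * Real.sqrt (1 / 4 - u ^ 2) = Real.sqrt (u ^ 2 * (1 / 4 - u ^ 2)) := by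
    rw [Real.sqrt_mul (sq_nonneg u), Real.sqrt_sq hu]
  have e2 : v * Real.sqrt (1 / 4 - v ^ 2) = Real.sqrt (v ^ 2 * (1 / 4 - v ^ 2)) := by
    rw [Real.sqrt_mul (sq_nonneg v), Real.sqrt_sq (by linarith)]
  rw [e1, e2]
  apply Real.sqrt_lt_sqrt (by nlinarith [sq_nonneg u])
  have huv2 : u ^ 2 < v ^ 2 := by nlinarith
  nlinarith [mul_pos (show (0:ℝ) < v ^ 2 - u ^ 2 by linarith)
    (show (0:ℝ) < 1 / 4 - u ^ 2 - v ^ 2 by linarith)]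

private lemma s_curve_aux_key (u v : ℝ) (hu : -(Real.sqrt 2 / 4) ≤ u) (huv : u < v)
    (hv : v ≤ Real.sqrt 2 / 4) :
    u * Real.sqrt (1 / 4 - u ^ 2) < v * Real.sqrt (1 / 4 - v ^ 2) := by
  have h2 : (Real.sqrt 2) ^ 2 = 2 := Real.sq_sqrt (by norm_num)
  have hs0 : (0:ℝ) ≤ Real.sqrt 2 := Real.sqrt_nonneg 2
  rcases le_or_gt 0 u with h | h
  · exact s_curve_aux_pos u v h huv hv
  · rcases le_or_gt v 0 with h' | h'
    · have := s_curve_aux_pos (-v) (-u) (by linarith) (by linarith) (by linarith)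
      simp only [neg_sq] at this
      nlinarith
    · have hs : 0 < Real.sqrt (1 / 4 - u ^ 2) := Real.sqrt_pos.2 (by nlinarith)
      have h1 : u * Real.sqrt (1 / 4 - u ^ 2) < 0 := mul_neg_of_neg_of_pos h hs
      have h2' : 0 ≤ v * Real.sqrt (1 / 4 - v ^ 2) :=
        mul_nonneg h'.le (Real.sqrt_nonneg _)
      linarith

/-- The S-curve is strictly decreasing on `[1/2 − √2/4, 1/2 + √2/4]`. -/
theorem s_curve_strictAntiOn_middle (f : ℝ → ℝ)
    (hf : ∀ x ∈ Set.Icc (0 : ℝ) 1,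
      f x = 1 / 2 + (1 - 2 * x) * Real.sqrt (1 / 4 - (x - 1 / 2) ^ 2)) :
    StrictAntiOn f (Set.Icc (1 / 2 - Real.sqrt 2 / 4) (1 / 2 + Real.sqrt 2 / 4)) := by
  intro x hx y hy hxy
  have h2 : (Real.sqrt 2) ^ 2 = 2 := Real.sq_sqrt (by norm_num)
  have hs0 : (0:ℝ) ≤ Real.sqrt 2 := Real.sqrt_nonneg 2
  have hs2 : Real.sqrt 2 ≤ 2 := by nlinarith
  have hx01 : x ∈ Set.Icc (0:ℝ) 1 := ⟨by linarith [hx.1], by linarith [hx.2]⟩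
  have hy01 : y ∈ Set.Icc (0:ℝ) 1 := ⟨by linarith [hy.1], by linarith [hy.2]⟩
  rw [hf x hx01, hf y hy01]
  have key := s_curve_aux_key (x - 1/2) (y - 1/2) (by linarith [hx.1]) (by linarith)
    (by linarith [hy.2])
  norm_num at key ⊢
  nlinarith [key]
end

section
/- Let f : [0,1] → ℝ be defined by f(x) = 1/2 + (1 − 2x)·√(1/4 − (x − 1/2)²). Then f is strictly monotonically increasing on the interval [1/2 + √2/4, 1]. -/
set_option maxHeartbeats 1000000


/-- The S-curve is strictly increasing on `[1/2 + √2/4, 1]`. -/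
theorem s_curve_strictMonoOn_right (f : ℝ → ℝ)
    (hf : ∀ x ∈ Set.Icc (0 : ℝ) 1,
      f x = 1 / 2 + (1 - 2 * x) * Real.sqrt (1 / 4 - (x - 1 / 2) ^ 2)) :
    StrictMonoOn f (Set.Icc (1 / 2 + Real.sqrt 2 / 4) (1 : ℝ)) := by
  have hs0 : (0:ℝ) < Real.sqrt 2 := Real.sqrt_pos.mpr (by norm_num)
  have hs2 : Real.sqrt 2 ^ 2 = 2 := Real.sq_sqrt (by norm_num)
  intro x1 hx1 x2 hx2 hlt
  obtain ⟨ha1, ha2⟩ := hx1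
  obtain ⟨hb1, hb2⟩ := hx2
  rw [hf x1 ⟨by linarith, ha2⟩, hf x2 ⟨by linarith, hb2⟩]
  set a := x1 - 1/2 with ha
  set b := x2 - 1/2 with hb
  have haL : Real.sqrt 2 / 4 ≤ a := by rw [ha]; linarith
  have hbL : Real.sqrt 2 / 4 ≤ b := by rw [hb]; linarith
  have haU : a ≤ 1/2 := by rw [ha]; linarith
  have hbU : b ≤ 1/2 := by rw [hb]; linarith
  have hab : a < b := by rw [ha, hb]; linarith
  have ha0 : 0 < a := lt_of_lt_of_le (by linarith) haL
  have hA : 0 ≤ 1/4 - a^2 := by nlinarith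
  have hB : 0 ≤ 1/4 - b^2 := by nlinarith
  have hsA := Real.sq_sqrt hA
  have hsB := Real.sq_sqrt hB
  have hsA0 := Real.sqrt_nonneg (1/4 - a^2)
  have hsB0 := Real.sqrt_nonneg (1/4 - b^2)
  have haSq : 1/8 ≤ a^2 := by nlinarith
  have hbSq : 1/8 < b^2 := by nlinarith
  have key : b * Real.sqrt (1/4 - b^2) < a * Real.sqrt (1/4 - a^2) := by
    apply lt_of_pow_lt_pow_left₀ 2 (by positivity)
    have e1 : (b * Real.sqrt (1/4 - b^2))^2 = b^2 * (1/4 - b^2) := by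
      rw [mul_pow, hsB]
    have e2 : (a * Real.sqrt (1/4 - a^2))^2 = a^2 * (1/4 - a^2) := by
      rw [mul_pow, hsA]
    have h1 : a^2 < b^2 := by nlinarith
    have h2 : (1:ℝ)/4 < a^2 + b^2 := by linarith
    rw [e1, e2]
    nlinarith [mul_pos (sub_pos.mpr h1) (show (0:ℝ) < a^2 + b^2 - 1/4 by linarith)]
  have g1 : 1/2 + (1 - 2*x1) * Real.sqrt (1/4 - a^2)
      = 1/2 - 2 * (a * Real.sqrt (1/4 - a^2)) := by rw [ha]; ring
  have g2 : 1/2 + (1 - 2*x2) * Real.sqrt (1/4 - b^2)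
      = 1/2 - 2 * (b * Real.sqrt (1/4 - b^2)) := by rw [hb]; ring
  calc 1/2 + (1 - 2*x1) * Real.sqrt (1/4 - a^2)
      = 1/2 - 2 * (a * Real.sqrt (1/4 - a^2)) := g1
    _ < 1/2 - 2 * (b * Real.sqrt (1/4 - b^2)) := by linarith
    _ = 1/2 + (1 - 2*x2) * Real.sqrt (1/4 - b^2) := g2.symm
end

section
/- Let f : [0,1] → ℝ be defined by f(x) = 1/2 + (1 − 2x)·√(1/4 − (x − 1/2)²), and let y₁(x) = 1/2 − √(1/4 − (x − 1/2)²) denote the lower semicircle of the circle (x − 1/2)² + (y − 1/2)² = 1/4. Then ∫₀¹ (f(x) − y₁(x)) dx = π/8; that is, the S-curve divides the disk of radius 1/2 (total area π/4) into a Yang region and a Yin region of equal area π/8 each. -/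
open intervalIntegral Real

lemma odd_part_zero :
    ∫ x in (0 : ℝ)..1, (1 - 2 * x) * Real.sqrt (1 / 4 - (x - 1 / 2) ^ 2) = 0 := by
  set g : ℝ → ℝ := fun x => (1 - 2 * x) * Real.sqrt (1 / 4 - (x - 1 / 2) ^ 2) with hg
  have h1 : ∫ x in (0 : ℝ)..1, g (1 - x) = ∫ x in (0 : ℝ)..1, g x := by
    rw [intervalIntegral.integral_comp_sub_left g 1]
    norm_num
  have h2 : ∀ x : ℝ, g (1 - x) = -g x := by
    intro x
    simp only [hg]
    have : (1 - x - 1 / 2) ^ 2 = (x - 1 / 2) ^ 2 := by ring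
    rw [this]; ring
  have h3 : ∫ x in (0 : ℝ)..1, g (1 - x) = -∫ x in (0 : ℝ)..1, g x := by
    simp_rw [h2]
    exact intervalIntegral.integral_neg
  have := h1.symm.trans h3
  linarith

lemma semicircle_part :
    ∫ x in (0 : ℝ)..1, Real.sqrt (1 / 4 - (x - 1 / 2) ^ 2) = π / 8 := by
  have key : ∀ x : ℝ, Real.sqrt (1 / 4 - (x - 1 / 2) ^ 2)
      = (1 / 2) * Real.sqrt (1 - (2 * x + -1) ^ 2) := by
    intro x
    have h : (1 / 4 : ℝ) - (x - 1 / 2) ^ 2 = (1 / 4) * (1 - (2 * x + -1) ^ 2) := by ring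
    rw [h, Real.sqrt_mul (by norm_num),
      show (1 / 4 : ℝ) = (1 / 2) ^ 2 by norm_num, Real.sqrt_sq (by norm_num)]
  simp_rw [key]
  rw [intervalIntegral.integral_const_mul,
    intervalIntegral.integral_comp_mul_add (fun t => Real.sqrt (1 - t ^ 2)) (two_ne_zero) (-1)]
  norm_num [integral_sqrt_one_sub_sq]
  ring

/-- The Yang region (between the lower semicircle `y₁` and the S-curve `f`)
has area `π/8`, i.e. exactly half of the disk's area `π/4`. -/
theorem yang_region_area (f : ℝ → ℝ)
    (hf : ∀ x ∈ Set.Icc (0 : ℝ) 1,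
      f x = 1 / 2 + (1 - 2 * x) * Real.sqrt (1 / 4 - (x - 1 / 2) ^ 2)) :
    ∫ x in (0 : ℝ)..1, (f x - (1 / 2 - Real.sqrt (1 / 4 - (x - 1 / 2) ^ 2))) = π / 8 := by
  have heq : Set.EqOn
      (fun x => f x - (1 / 2 - Real.sqrt (1 / 4 - (x - 1 / 2) ^ 2)))
      (fun x => (1 - 2 * x) * Real.sqrt (1 / 4 - (x - 1 / 2) ^ 2)
        + Real.sqrt (1 / 4 - (x - 1 / 2) ^ 2))
      (Set.uIcc (0 : ℝ) 1) := by
    intro x hx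
    rw [Set.uIcc_of_le (by norm_num)] at hx
    simp only
    rw [hf x hx]
    ring
  rw [intervalIntegral.integral_congr heq]
  have hc : Continuous fun x : ℝ => Real.sqrt (1 / 4 - (x - 1 / 2) ^ 2) := by
    fun_prop
  have hcc : Continuous fun x : ℝ => (1 - 2 * x) * Real.sqrt (1 / 4 - (x - 1 / 2) ^ 2) := by
    fun_prop
  rw [intervalIntegral.integral_add (hcc.intervalIntegrable 0 1)
    (hc.intervalIntegrable 0 1), odd_part_zero, semicircle_part]
  ring
end
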